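/- arXiv:2006.14748 — 6 statements merged into one kernel-verified Lean document; each statement's English description precedes it below -/
import Mathlib

section
/- Let f : ℝ^n → ℝ^C be a classifier assigning to each input a score f_c(x) for every class c ∈ {1,…,C}, and let I : ℝ^n × {1,…,C} → ℝ^u be an interpreter satisfying the completeness axiom: for all inputs x and classes c, the sum over all coordinates i of [I(x,c)]_i equals f_c(x). Suppose x is a natural example predicted as class y (so f_y(x) ≥ f_j(x) for all j) and x′ is an adversarial example predicted as class y′ ≠ y (so f_{y′}(x′) ≥ f_j(x′) for all j, in particular f_{y′}(x′) ≥ f_y(x′)). Then the ℓ₁ two-class interpretation discrepancy satisfies (1/2)(‖I(x,y) − I(x′,y)‖₁ + ‖I(x,y′) − I(x′,y′)‖₁) ≥ (1/2)(f_y(x) − f_{y′}(x)). -/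
/-- **Proposition 1 (completeness axiom case).**
If the interpreter `I` satisfies the completeness axiom
`∑ i, [I(x,c)]ᵢ = f_c(x)`, `x` is predicted as class `y` and the adversarial
example `x'` is predicted as class `y' ≠ y`, then the ℓ₁ two-class
interpretation discrepancy is bounded below by half the classification margin:
`(1/2)(‖I(x,y) − I(x',y)‖₁ + ‖I(x,y') − I(x',y')‖₁) ≥ (1/2)(f_y(x) − f_{y'}(x))`. -/
theorem l1_two_class_discrepancy_lower_bound
    (n C u : ℕ)
    (f : (Fin n → ℝ) → Fin C → ℝ)
    (I : (Fin n → ℝ) → Fin C → Fin u → ℝ)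
    (hcomp : ∀ x c, ∑ i, I x c i = f x c)
    (x x' : Fin n → ℝ) (y y' : Fin C)
    (hy : ∀ j, f x j ≤ f x y)
    (hy' : ∀ j, f x' j ≤ f x' y')
    (hne : y' ≠ y) :
    (1 / 2) * (f x y - f x y') ≤
      (1 / 2) * ((∑ i, |I x y i - I x' y i|) + (∑ i, |I x y' i - I x' y' i|)) := by
  have h1 : f x y - f x' y ≤ ∑ i, |I x y i - I x' y i| := by
    rw [← hcomp x y, ← hcomp x' y, ← Finset.sum_sub_distrib]
    exact le_trans (le_abs_self _) (Finset.abs_sum_le_sum_abs _ _)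
  have h2 : f x' y' - f x y' ≤ ∑ i, |I x y' i - I x' y' i| := by
    calc f x' y' - f x y' ≤ |f x y' - f x' y'| := by
          rw [abs_sub_comm]; exact le_abs_self _
      _ = |∑ i, (I x y' i - I x' y' i)| := by rw [Finset.sum_sub_distrib, hcomp, hcomp]
      _ ≤ _ := Finset.abs_sum_le_sum_abs _ _
  have h3 : f x' y ≤ f x' y' := hy' y
  nlinarith [h1, h2, h3]
end

section
/- Let f : ℝ^n → ℝ^C be a classifier, let g : ℝ → ℝ be monotonically increasing, and let I : ℝ^n × {1,…,C} → ℝ^u be an interpreter satisfying the generalized completeness axiom: for all inputs x and classes c, Σ_{i=1}^{u} [I(x,c)]_i = g(f_c(x)). Suppose x is predicted as class y and x′ is predicted as class y′ ≠ y (in particular f_{y′}(x′) ≥ f_y(x′)). Then (1/2)(‖I(x,y) − I(x′,y)‖₁ + ‖I(x,y′) − I(x′,y′)‖₁) ≥ (1/2)(g(f_y(x)) − g(f_{y′}(x))). -/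
/-- **Proposition 1 (generalized completeness axiom).**
If the interpreter `I` satisfies `∑ i, [I(x,c)]ᵢ = g(f_c(x))` for a
monotonically increasing `g`, `x` is predicted as class `y` and `x'` is
predicted as class `y' ≠ y`, then
`(1/2)(‖I(x,y) − I(x',y)‖₁ + ‖I(x,y') − I(x',y')‖₁) ≥ (1/2)(g(f_y(x)) − g(f_{y'}(x)))`. -/
theorem l1_two_class_discrepancy_lower_bound_general
    (n C u : ℕ)
    (f : (Fin n → ℝ) → Fin C → ℝ)
    (g : ℝ → ℝ) (hg : Monotone g)
    (I : (Fin n → ℝ) → Fin C → Fin u → ℝ)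
    (hcomp : ∀ x c, ∑ i, I x c i = g (f x c))
    (x x' : Fin n → ℝ) (y y' : Fin C)
    (hy : ∀ j, f x j ≤ f x y)
    (hy' : ∀ j, f x' j ≤ f x' y')
    (hne : y' ≠ y) :
    (1 / 2) * (g (f x y) - g (f x y')) ≤
      (1 / 2) * ((∑ i, |I x y i - I x' y i|) + (∑ i, |I x y' i - I x' y' i|)) := by
  have h1 : g (f x y) - g (f x' y) ≤ ∑ i, |I x y i - I x' y i| := by
    calc g (f x y) - g (f x' y) = ∑ i, (I x y i - I x' y i) := by
          rw [Finset.sum_sub_distrib, hcomp, hcomp]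
      _ ≤ ∑ i, |I x y i - I x' y i| :=
          Finset.sum_le_sum fun i _ => le_abs_self _
  have h2 : g (f x' y') - g (f x y') ≤ ∑ i, |I x y' i - I x' y' i| := by
    calc g (f x' y') - g (f x y') = ∑ i, (I x' y' i - I x y' i) := by
          rw [Finset.sum_sub_distrib, hcomp, hcomp]
      _ ≤ ∑ i, |I x' y' i - I x y' i| :=
          Finset.sum_le_sum fun i _ => le_abs_self _
      _ = ∑ i, |I x y' i - I x' y' i| := by
          exact Finset.sum_congr rfl fun i _ => abs_sub_comm _ _
  have h3 : g (f x' y) ≤ g (f x' y') := hg (hy' y)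
  nlinarith [h1, h2, h3]
end

section
/- Let f : ℝ^n → ℝ^C be a classifier, let a > 0 be a scaling factor, and let I : ℝ^n × {1,…,C} → ℝ^u be an interpreter satisfying the scaled completeness axiom: for all inputs x and classes c, Σ_{i=1}^{u} [I(x,c)]_i = a · f_c(x). Suppose x is predicted as class y and x′ is predicted as class y′ ≠ y (in particular f_{y′}(x′) ≥ f_y(x′)). Then (1/2)(‖I(x,y) − I(x′,y)‖₁ + ‖I(x,y′) − I(x′,y′)‖₁) ≥ (a/2)(f_y(x) − f_{y′}(x)). -/
/-- **Proposition 1 (scaled completeness axiom).**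
If the interpreter `I` satisfies `∑ i, [I(x,c)]ᵢ = a · f_c(x)` for some scaling
factor `a > 0`, `x` is predicted as class `y` and `x'` is predicted as class
`y' ≠ y`, then
`(1/2)(‖I(x,y) − I(x',y)‖₁ + ‖I(x,y') − I(x',y')‖₁) ≥ (a/2)(f_y(x) − f_{y'}(x))`. -/
theorem l1_two_class_discrepancy_lower_bound_scaled
    (n C u : ℕ)
    (f : (Fin n → ℝ) → Fin C → ℝ)
    (a : ℝ) (ha : 0 < a)
    (I : (Fin n → ℝ) → Fin C → Fin u → ℝ)
    (hcomp : ∀ x c, ∑ i, I x c i = a * f x c)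
    (x x' : Fin n → ℝ) (y y' : Fin C)
    (hy : ∀ j, f x j ≤ f x y)
    (hy' : ∀ j, f x' j ≤ f x' y')
    (hne : y' ≠ y) :
    (a / 2) * (f x y - f x y') ≤
      (1 / 2) * ((∑ i, |I x y i - I x' y i|) + (∑ i, |I x y' i - I x' y' i|)) := by
  have h1 : a * f x y - a * f x' y ≤ ∑ i, |I x y i - I x' y i| := by
    calc a * f x y - a * f x' y = ∑ i, (I x y i - I x' y i) := by
          rw [Finset.sum_sub_distrib, hcomp, hcomp]
      _ ≤ |∑ i, (I x y i - I x' y i)| := le_abs_self _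
      _ ≤ ∑ i, |I x y i - I x' y i| := Finset.abs_sum_le_sum_abs _ _
  have h2 : a * f x' y' - a * f x y' ≤ ∑ i, |I x y' i - I x' y' i| := by
    calc a * f x' y' - a * f x y' = -∑ i, (I x y' i - I x' y' i) := by
          rw [Finset.sum_sub_distrib, hcomp, hcomp]; ring
      _ ≤ |∑ i, (I x y' i - I x' y' i)| := neg_le_abs _
      _ ≤ ∑ i, |I x y' i - I x' y' i| := Finset.abs_sum_le_sum_abs _ _
  have h3 : a * f x' y ≤ a * f x' y' := by
    exact mul_le_mul_of_nonneg_left (hy' y) ha.le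
  nlinarith [h1, h2, h3]
end

section
/- Let f : ℝ^n → ℝ^C be a classifier, let g : ℝ → ℝ be any function, and let I : ℝ^n × {1,…,C} → ℝ^u be an interpreter satisfying the generalized completeness axiom: Σ_{i=1}^{u} [I(x,c)]_i = g(f_c(x)) for all inputs x and classes c. Then for any two inputs x, x′ ∈ ℝ^n and any two classes y, y′, [g(f_{y′}(x′)) − g(f_y(x′))] + [g(f_y(x)) − g(f_{y′}(x))] ≤ ‖I(x′,y′) − I(x,y′)‖₁ + ‖I(x,y) − I(x′,y)‖₁. -/
/-- **Two-class interpretation bound.**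
If the interpreter `I` satisfies the generalized completeness axiom
`∑ i, [I(x,c)]ᵢ = g(f_c(x))`, then for any inputs `x, x'` and classes `y, y'`,
`[g(f_{y'}(x')) − g(f_y(x'))] + [g(f_y(x)) − g(f_{y'}(x))]
  ≤ ‖I(x',y') − I(x,y')‖₁ + ‖I(x,y) − I(x',y)‖₁`. -/
theorem two_class_margin_change_le_l1_discrepancy
    (n C u : ℕ)
    (f : (Fin n → ℝ) → Fin C → ℝ)
    (g : ℝ → ℝ)
    (I : (Fin n → ℝ) → Fin C → Fin u → ℝ)
    (hcomp : ∀ x c, ∑ i, I x c i = g (f x c))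
    (x x' : Fin n → ℝ) (y y' : Fin C) :
    (g (f x' y') - g (f x' y)) + (g (f x y) - g (f x y')) ≤
      (∑ i, |I x' y' i - I x y' i|) + (∑ i, |I x y i - I x' y i|) := by
  have h1 : g (f x' y') - g (f x y') ≤ ∑ i, |I x' y' i - I x y' i| := by
    rw [← hcomp, ← hcomp, ← Finset.sum_sub_distrib]
    exact le_trans (le_abs_self _) (Finset.abs_sum_le_sum_abs _ _)
  have h2 : g (f x y) - g (f x' y) ≤ ∑ i, |I x y i - I x' y i| := by
    rw [← hcomp, ← hcomp, ← Finset.sum_sub_distrib]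
    exact le_trans (le_abs_self _) (Finset.abs_sum_le_sum_abs _ _)
  linarith
end

section
/- Let f : ℝ^n → ℝ^C be a classifier and let I : ℝ^n × {1,…,C} → ℝ^u be an interpreter satisfying the completeness axiom: Σ_{i=1}^{u} [I(x,c)]_i = f_c(x) for all inputs x and classes c. Let x be an input predicted as class y, and let y′ ≠ y be a target class with f_y(x) > f_{y′}(x). If a perturbed input x′ satisfies the interpretation discrepancy constraint (1/2)(‖I(x,y) − I(x′,y)‖₁ + ‖I(x,y′) − I(x′,y′)‖₁) < (1/2)(f_y(x) − f_{y′}(x)), then x′ cannot be a successful targeted attack toward y′; that is, f_{y′}(x′) < f_y(x′). -/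
/-- **Constraining interpretation discrepancy prevents successful attacks.**
If the interpreter `I` satisfies the completeness axiom, `x` is predicted as
class `y`, `y' ≠ y` is a target class with `f_y(x) > f_{y'}(x)`, and the
perturbed input `x'` satisfies the interpretation discrepancy constraint
`(1/2)(‖I(x,y) − I(x',y)‖₁ + ‖I(x,y') − I(x',y')‖₁) < (1/2)(f_y(x) − f_{y'}(x))`,
then `x'` cannot be a successful targeted attack toward `y'`:
`f_{y'}(x') < f_y(x')`. -/
theorem small_discrepancy_prevents_targeted_attack
    (n C u : ℕ)
    (f : (Fin n → ℝ) → Fin C → ℝ)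
    (I : (Fin n → ℝ) → Fin C → Fin u → ℝ)
    (hcomp : ∀ x c, ∑ i, I x c i = f x c)
    (x x' : Fin n → ℝ) (y y' : Fin C)
    (hy : ∀ j, f x j ≤ f x y)
    (hne : y' ≠ y)
    (hmargin : f x y' < f x y)
    (hdisc : (1 / 2) * ((∑ i, |I x y i - I x' y i|) + (∑ i, |I x y' i - I x' y' i|))
      < (1 / 2) * (f x y - f x y')) :
    f x' y' < f x' y := by
  have h1 : f x y - f x' y = ∑ i, (I x y i - I x' y i) := by
    rw [Finset.sum_sub_distrib, hcomp, hcomp]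
  have h2 : f x' y' - f x y' = ∑ i, (I x' y' i - I x y' i) := by
    rw [Finset.sum_sub_distrib, hcomp, hcomp]
  have b1 : ∑ i, (I x y i - I x' y i) ≤ ∑ i, |I x y i - I x' y i| :=
    Finset.sum_le_sum fun i _ => le_abs_self _
  have b2 : ∑ i, (I x' y' i - I x y' i) ≤ ∑ i, |I x y' i - I x' y' i| := by
    refine Finset.sum_le_sum fun i _ => ?_
    rw [abs_sub_comm]
    exact le_abs_self _
  linarith
end

section
/- Let F : ℝ^d → ℝ be continuously differentiable and let x, a ∈ ℝ^d. Define the integrated gradients attribution of coordinate i as IG_i = (x_i − a_i) · ∫_0^1 (∂F/∂x_i)(a + α(x − a)) dα. Then integrated gradients satisfies the completeness axiom: Σ_{i=1}^{d} IG_i = F(x) − F(a). -/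
/-- **Integrated gradients satisfies the completeness axiom.**
For a continuously differentiable `F : ℝ^d → ℝ`, an input `x` and a baseline
`a`, the integrated gradients attributions
`IGᵢ = (xᵢ − aᵢ) ∫_0^1 (∂F/∂xᵢ)(a + α(x − a)) dα` sum to `F(x) − F(a)`. -/
theorem integrated_gradients_completeness
    (d : ℕ) (F : EuclideanSpace ℝ (Fin d) → ℝ) (hF : ContDiff ℝ 1 F)
    (x a : EuclideanSpace ℝ (Fin d)) :
    ∑ i, (x i - a i) *
      (∫ α in (0:ℝ)..1, fderiv ℝ F (a + α • (x - a)) (EuclideanSpace.single i 1))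
      = F x - F a := by
  set p : ℝ → EuclideanSpace ℝ (Fin d) := fun α => a + α • (x - a) with hp
  have hpc : Continuous p := by continuity
  have hfd : Continuous (fun y => fderiv ℝ F y) := hF.continuous_fderiv one_ne_zero
  have hFd : Differentiable ℝ F := hF.differentiable one_ne_zero
  have hderiv : ∀ α : ℝ, HasDerivAt (fun t => F (p t)) (fderiv ℝ F (p α) (x - a)) α := by
    intro α
    have h1 : HasDerivAt p (x - a) α := by
      have : HasDerivAt (fun t : ℝ => t • (x - a)) ((1:ℝ) • (x - a)) α :=
        (hasDerivAt_id α).smul_const (x - a)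
      simpa [hp] using this.const_add a
    exact ((hFd (p α)).hasFDerivAt.comp_hasDerivAt α h1)
  have hcont : Continuous (fun α : ℝ => fderiv ℝ F (p α) (x - a)) := by
    exact (isBoundedBilinearMap_apply.continuous.comp
      ((hfd.comp hpc).prodMk continuous_const))
  have key : (∫ α in (0:ℝ)..1, fderiv ℝ F (p α) (x - a)) = F x - F a := by
    have := intervalIntegral.integral_eq_sub_of_hasDerivAt
      (fun α _ => hderiv α) (hcont.intervalIntegrable 0 1)
    simpa [hp] using this
  have hsum : ∀ α : ℝ, fderiv ℝ F (p α) (x - a)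
      = ∑ i, (x i - a i) * fderiv ℝ F (p α) (EuclideanSpace.single i 1) := by
    intro α
    have hxa : (x - a) = ∑ i, (x i - a i) • (EuclideanSpace.single i 1 : EuclideanSpace ℝ (Fin d)) := by
      have hb := (EuclideanSpace.basisFun (Fin d) ℝ).sum_repr (x - a)
      simp only [EuclideanSpace.basisFun_apply, EuclideanSpace.basisFun_repr,
        PiLp.sub_apply] at hb
      exact hb.symm
    conv_lhs => rw [hxa]
    rw [map_sum]
    simp [smul_eq_mul]
  calc ∑ i, (x i - a i) *
      (∫ α in (0:ℝ)..1, fderiv ℝ F (a + α • (x - a)) (EuclideanSpace.single i 1))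
      = ∫ α in (0:ℝ)..1, ∑ i, (x i - a i) * fderiv ℝ F (p α) (EuclideanSpace.single i 1) := by
        rw [intervalIntegral.integral_finset_sum]
        · simp [intervalIntegral.integral_const_mul, hp]
        · intro i _
          have : Continuous (fun α : ℝ => fderiv ℝ F (p α) (EuclideanSpace.single i 1)) :=
            (isBoundedBilinearMap_apply.continuous.comp
              ((hfd.comp hpc).prodMk continuous_const))
          exact (continuous_const.mul this).intervalIntegrable 0 1
    _ = ∫ α in (0:ℝ)..1, fderiv ℝ F (p α) (x - a) := by
        simp_rw [← hsum]
    _ = F x - F a := key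
end
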